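/- Let n ≥ 1 and 0 ≤ k ≤ n. The Whitney forms {ω_σ : σ ∈ S_k^n} are linearly independent over ℝ in the space of polynomial k-forms on ℝ^n; consequently the space P_1^− Λ^k(T) := span{ω_σ : σ ∈ S_k^n} has dimension binom(n+1, k+1). -/
import Mathlib


open MeasureTheory Matrix

noncomputable section

/-- A differential `k`-form on `ℝⁿ`, recorded via its pointwise evaluation on `k`-tuples of
vectors: `ω x (u 0, …, u (k-1)) : ℝ`. -/
abbrev Form (n k : ℕ) : Type := (Fin n → ℝ) → (Fin k → (Fin n → ℝ)) → ℝ

/-- `ω` is a polynomial differential form: all coefficient functions are polynomial. -/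
def IsPolyForm {n k : ℕ} (ω : Form n k) : Prop :=
  ∀ u : Fin k → (Fin n → ℝ), ∃ p : MvPolynomial (Fin n) ℝ,
    ∀ x, ω x u = MvPolynomial.eval x p

/-- `ω` is a polynomial differential form of degree at most `r`. -/
def IsPolyFormDeg {n k : ℕ} (r : ℕ) (ω : Form n k) : Prop :=
  ∀ u : Fin k → (Fin n → ℝ), ∃ p : MvPolynomial (Fin n) ℝ,
    p.totalDegree ≤ r ∧ ∀ x, ω x u = MvPolynomial.eval x p

/-- `ω` is a continuous differential form. -/
def ContinuousForm {n k : ℕ} (ω : Form n k) : Prop :=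
  ∀ u : Fin k → (Fin n → ℝ), Continuous fun x => ω x u

/-- The standard `k`-simplex `Δᵏ = {x ∈ ℝᵏ : xⱼ ≥ 0, Σⱼ xⱼ ≤ 1}`. -/
def stdSimplexSet (k : ℕ) : Set (Fin k → ℝ) :=
  {x | (∀ j, 0 ≤ x j) ∧ ∑ j, x j ≤ 1}

/-- Integral of the `k`-form `ω` over the affine `k`-simplex with ordered vertices
`p 0, …, p k`:  `∫_{Δᵏ} ω(p₀ + Σⱼ xⱼ (pⱼ − p₀))(p₁ − p₀, …, p_k − p₀) dx`. -/
def simpIntegral {n k : ℕ} (ω : Form n k) (p : Fin (k + 1) → (Fin n → ℝ)) : ℝ :=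
  ∫ x in stdSimplexSet k,
    ω (p 0 + ∑ j : Fin k, x j • (p j.succ - p 0)) (fun j => p j.succ - p 0)

/-- The Whitney form `ω_σ = Σᵢ (−1)ⁱ λ_{σ(i)} dλ_{σ(0)} ∧ … ∧ ω̂ᵢ ∧ … ∧ dλ_{σ(k)}`, where the
wedge of the (constant) differentials `dλⱼ` is evaluated as a determinant. -/
def whitney {n k : ℕ} (lam : Fin (n + 1) → ((Fin n → ℝ) →ᵃ[ℝ] ℝ))
    (σ : Fin (k + 1) → Fin (n + 1)) : Form n k :=
  fun x u => ∑ i : Fin (k + 1), (-1 : ℝ) ^ (i : ℕ) * lam (σ i) x *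
    Matrix.det (Matrix.of fun a b : Fin k => (lam (σ (i.succAbove a))).linear (u b))

/-- `λ^α ω_σ`, the Whitney form scaled by the barycentric monomial `λ^α`. -/
def scaledWhitney {n k : ℕ} (lam : Fin (n + 1) → ((Fin n → ℝ) →ᵃ[ℝ] ℝ))
    (α : Fin (n + 1) → ℕ) (σ : Fin (k + 1) → Fin (n + 1)) : Form n k :=
  fun x u => (∏ i, lam i x ^ α i) * whitney lam σ x u

/-- The space `P_r^- Λ^k(T)`: the span of `p · ω_σ` for `p` a polynomial of degree `≤ r − 1`
and `σ` strictly increasing. -/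
def PrMinus (n k r : ℕ) (lam : Fin (n + 1) → ((Fin n → ℝ) →ᵃ[ℝ] ℝ)) :
    Submodule ℝ (Form n k) :=
  Submodule.span ℝ {η : Form n k | ∃ (p : MvPolynomial (Fin n) ℝ)
    (σ : Fin (k + 1) → Fin (n + 1)), StrictMono σ ∧ p.totalDegree ≤ r - 1 ∧
    η = fun x u => MvPolynomial.eval x p * whitney lam σ x u}

/-- The small `k`-simplex `s_{(α,σ)}`, given by its ordered vertices
`(v_{σ(j)} + Σᵢ αᵢ vᵢ)/r`. -/
def smallSimplex {n k : ℕ} (v : Fin (n + 1) → (Fin n → ℝ)) (r : ℕ)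
    (σ : Fin (k + 1) → Fin (n + 1)) (α : Fin (n + 1) → ℕ) :
    Fin (k + 1) → (Fin n → ℝ) :=
  fun j => (r : ℝ)⁻¹ • (v (σ j) + ∑ i, (α i : ℝ) • v i)

/-- The index set of the minimal set `X_{r,min}^k(T)`: pairs `(σ, α)` with `σ` strictly
increasing, `|α| = r − 1` and `αᵢ = 0` for every `i < σ(0)`. -/
def MinIdx (n k r : ℕ) : Type :=
  {q : (Fin (k + 1) → Fin (n + 1)) × (Fin (n + 1) → ℕ) //
    StrictMono q.1 ∧ (∑ i, q.2 i) = r - 1 ∧ ∀ i, i < q.1 0 → q.2 i = 0}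

/-- The interpolation operator `Π ω = Σᵢ (∫_{sᵢ} ω) ω_{sᵢ}` built from a dual family `ωs`. -/
def lagrangeProj {n k N : ℕ} (s : Fin N → Fin (k + 1) → (Fin n → ℝ))
    (ωs : Fin N → Form n k) (ω : Form n k) : Form n k :=
  fun x u => ∑ i, simpIntegral ω (s i) * ωs i x u

/-- Least squares error functional `Σᵢ (∫_{sᵢ} (η − ω))²`. -/
def lsError {n k M : ℕ} (s : Fin M → Fin (k + 1) → (Fin n → ℝ))
    (ω η : Form n k) : ℝ :=
  ∑ i, (simpIntegral (η - ω) (s i)) ^ 2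

/-- Key duality: evaluating the Whitney form `ω_ρ` at the vertex `v_{τ(0)}` on the edge
vectors of the face `τ` gives `δ_{ρτ}`. -/
lemma whitney_eval {n k : ℕ}
    (v : Fin (n + 1) → (Fin n → ℝ))
    (lam : Fin (n + 1) → ((Fin n → ℝ) →ᵃ[ℝ] ℝ))
    (hlam : ∀ i j, lam i (v j) = if i = j then 1 else 0)
    (ρ τ : Fin (k + 1) → Fin (n + 1)) (hρ : StrictMono ρ) (hτ : StrictMono τ) :
    whitney lam ρ (v (τ 0)) (fun b => v (τ b.succ) - v (τ 0)) =
      if ρ = τ then 1 else 0 := by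
  have hent : ∀ (j : Fin (n + 1)) (b : Fin k),
      (lam j).linear (v (τ b.succ) - v (τ 0)) =
        (if j = τ b.succ then (1 : ℝ) else 0) - (if j = τ 0 then 1 else 0) := by
    intro j b
    have h := (lam j).linearMap_vsub (v (τ b.succ)) (v (τ 0))
    simpa [vsub_eq_sub, hlam] using h
  unfold whitney
  by_cases h : ρ = τ
  · subst h
    rw [if_pos rfl, Finset.sum_eq_single (0 : Fin (k + 1))]
    · have hm : (Matrix.of fun a b : Fin k =>
          (lam (ρ ((0 : Fin (k + 1)).succAbove a))).linear (v (ρ b.succ) - v (ρ 0))) =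
            (1 : Matrix (Fin k) (Fin k) ℝ) := by
        ext a b
        rw [Matrix.of_apply, Fin.succAbove_zero, hent, Matrix.one_apply]
        have h1 : ρ a.succ = ρ b.succ ↔ a = b := by
          rw [hρ.injective.eq_iff, Fin.succ_inj]
        have h2 : ρ a.succ ≠ ρ 0 := fun hh => (Fin.succ_ne_zero a) (hρ.injective hh)
        by_cases hab : a = b
        · subst hab; simp [h2]
        · simp [hab, h1, h2]
      rw [hm, Matrix.det_one, hlam, if_pos rfl]
      norm_num
    · intro i _ hi
      have : ρ i ≠ ρ 0 := fun hh => hi (hρ.injective hh)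
      rw [hlam, if_neg this]
      ring
    · intro hh; exact absurd (Finset.mem_univ _) hh
  · rw [if_neg h]
    apply Finset.sum_eq_zero
    intro i _
    by_cases hi : ρ i = τ 0
    · -- find an element of the range of ρ outside the range of τ
      have hr : Set.range ρ ≠ Set.range τ := by
        intro he
        have hw : WellFoundedLT (Fin (k + 1)) := inferInstance
        exact h ((@StrictMono.range_inj (Fin (k + 1)) (Fin (n + 1)) _ _ hw ρ τ hρ hτ).1 he)
      have hsub : ¬ (Finset.univ.image ρ ⊆ Finset.univ.image τ) := by
        intro hs
        apply hr
        have hcard : (Finset.univ.image τ).card ≤ (Finset.univ.image ρ).card := by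
          rw [Finset.card_image_of_injective _ hρ.injective,
            Finset.card_image_of_injective _ hτ.injective]
        have := Finset.eq_of_subset_of_card_le hs hcard
        rw [← Set.image_univ, ← Set.image_univ, ← Finset.coe_univ, ← Finset.coe_image,
          ← Finset.coe_image, this]
      obtain ⟨x, hx1, hx2⟩ := Finset.not_subset.1 hsub
      obtain ⟨j, _, rfl⟩ := Finset.mem_image.1 hx1
      have hji : j ≠ i := by
        rintro rfl
        exact hx2 (Finset.mem_image.2 ⟨0, Finset.mem_univ _, hi.symm⟩)
      obtain ⟨a, ha⟩ := Fin.exists_succAbove_eq hji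
      have hdet : (Matrix.of fun a b : Fin k =>
          (lam (ρ (i.succAbove a))).linear (v (τ b.succ) - v (τ 0))).det = 0 := by
        apply Matrix.det_eq_zero_of_row_eq_zero a
        intro b
        rw [Matrix.of_apply, ha, hent]
        have h1 : ρ j ≠ τ b.succ := fun hh =>
          hx2 (Finset.mem_image.2 ⟨b.succ, Finset.mem_univ _, hh.symm⟩)
        have h2 : ρ j ≠ τ 0 := fun hh =>
          hx2 (Finset.mem_image.2 ⟨0, Finset.mem_univ _, hh.symm⟩)
        rw [if_neg h1, if_neg h2, sub_zero]
      rw [hdet]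
      ring
    · rw [hlam, if_neg hi]
      ring

/-- Strictly monotone maps `Fin (k+1) → Fin (n+1)` correspond to `(k+1)`-element subsets. -/
def strictMonoEquivFinset {n k : ℕ} :
    {σ : Fin (k + 1) → Fin (n + 1) // StrictMono σ} ≃
      {s : Finset (Fin (n + 1)) // s.card = k + 1} where
  toFun σ := ⟨Finset.univ.image σ.1, by
    rw [Finset.card_image_of_injective _ σ.2.injective, Finset.card_univ, Fintype.card_fin]⟩
  invFun s := ⟨s.1.orderEmbOfFin s.2, (s.1.orderEmbOfFin s.2).strictMono⟩
  left_inv σ := by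
    apply Subtype.ext
    exact (Finset.orderEmbOfFin_unique _
      (fun x => Finset.mem_image_of_mem _ (Finset.mem_univ x)) σ.2).symm
  right_inv s := by
    apply Subtype.ext
    rw [← Finset.coe_inj, Finset.coe_image, Finset.coe_univ, Set.image_univ,
      Finset.range_orderEmbOfFin]

/-- The Whitney forms `ω_σ`, `σ ∈ S_k^n`, are linearly independent, and their
span `P_1^- Λ^k(T)` has dimension `binom(n+1, k+1)`. -/
theorem whitney_linearIndependent_finrank {n k : ℕ} (hn : 1 ≤ n) (hk : k ≤ n)
    (v : Fin (n + 1) → (Fin n → ℝ)) (hv : AffineIndependent ℝ v)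
    (lam : Fin (n + 1) → ((Fin n → ℝ) →ᵃ[ℝ] ℝ))
    (hlam : ∀ i j, lam i (v j) = if i = j then 1 else 0) :
    LinearIndependent ℝ
      (fun σ : {σ : Fin (k + 1) → Fin (n + 1) // StrictMono σ} => whitney lam σ.val) ∧
    Module.finrank ℝ
      (Submodule.span ℝ (Set.range
        (fun σ : {σ : Fin (k + 1) → Fin (n + 1) // StrictMono σ} => whitney lam σ.val))) =
      (n + 1).choose (k + 1) := by
  classical
  haveI : Fintype {σ : Fin (k + 1) → Fin (n + 1) // StrictMono σ} := Fintype.ofFinite _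
  have li : LinearIndependent ℝ
      (fun σ : {σ : Fin (k + 1) → Fin (n + 1) // StrictMono σ} => whitney lam σ.val) := by
    rw [Fintype.linearIndependent_iff]
    intro g hg τ
    have hev := congrFun (congrFun hg (v (τ.1 0))) (fun b => v (τ.1 b.succ) - v (τ.1 0))
    rw [show ((0 : Form n k) (v (τ.1 0)) fun b => v (τ.1 b.succ) - v (τ.1 0)) = 0 from rfl] at hev
    rw [Finset.sum_apply, Finset.sum_apply] at hev
    have heq : (∑ σ : {σ : Fin (k + 1) → Fin (n + 1) // StrictMono σ},
          (g σ • whitney lam σ.1) (v (τ.1 0)) (fun b => v (τ.1 b.succ) - v (τ.1 0))) =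
        ∑ σ : {σ : Fin (k + 1) → Fin (n + 1) // StrictMono σ},
          g σ * (if σ.1 = τ.1 then (1 : ℝ) else 0) := by
      apply Finset.sum_congr rfl
      intro σ _
      rw [Pi.smul_apply, Pi.smul_apply, smul_eq_mul,
        whitney_eval v lam hlam σ.1 τ.1 σ.2 τ.2]
    rw [heq, Finset.sum_eq_single τ] at hev
    · simpa using hev
    · intro σ _ hστ
      rw [if_neg (fun hh => hστ (Subtype.ext hh))]
      ring
    · intro hh; exact absurd (Finset.mem_univ _) hh
  refine ⟨li, ?_⟩
  rw [finrank_span_eq_card li, Fintype.card_congr (strictMonoEquivFinset (n := n) (k := k)),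
    Fintype.card_finset_len, Fintype.card_fin]
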